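/- arXiv:0801.3185 — 3 statements merged into one kernel-verified Lean document; each statement's English description precedes it below -/
import Mathlib

section
/- Consider p coupled harmonic oscillators ẋ_i = y_i, ẏ_i = −x_i + Σ_j γ_{ij}(y_j − y_i), i = 1,…,p, where Γ = [γ_{ij}] is connected. Then the oscillators synchronize: |x_i(t) − x_j(t)| + |y_i(t) − y_j(t)| → 0 as t → ∞ for all i, j. -/
open Matrix NormedSpace Filter
open scoped Kronecker

noncomputable section

/-- The all-ones vector. -/
def ones (p : ℕ) : Fin p → ℝ := fun _ => 1

def IsConnectedMatrix {p : ℕ} (Γ : Matrix (Fin p) (Fin p) ℝ) : Prop :=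
  (∀ i j, i ≠ j → 0 ≤ Γ i j) ∧ (∀ i, ∑ j, Γ i j = 0) ∧
    ∃ k, ∀ i, Relation.ReflTransGen (fun a b => 0 < Γ a b) i k

/- ## Auxiliary lemmas -/

lemma sum_sub_eq {p : ℕ} {Γ : Matrix (Fin p) (Fin p) ℝ} (hrow : ∀ i, ∑ j, Γ i j = 0)
    (w : Fin p → ℝ) (i : Fin p) : ∑ j, Γ i j * w j = ∑ j, Γ i j * (w j - w i) := by
  simp only [mul_sub, Finset.sum_sub_distrib, ← Finset.sum_mul, hrow, zero_mul, sub_zero]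

lemma sum_sub_eq' {p : ℕ} {Γ : Matrix (Fin p) (Fin p) ℝ} (hrow : ∀ i, ∑ j, Γ i j = 0)
    (w : Fin p → ℝ) (i : Fin p) (a : ℝ) : ∑ j, Γ i j * (w j - a) = ∑ j, Γ i j * w j := by
  simp only [mul_sub, Finset.sum_sub_distrib, ← Finset.sum_mul, hrow, zero_mul, sub_zero]

lemma aux_max {p : ℕ} {Γ : Matrix (Fin p) (Fin p) ℝ}
    (hpos : ∀ i j, i ≠ j → 0 ≤ Γ i j) (hrow : ∀ i, ∑ j, Γ i j = 0) {k : Fin p}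
    (hk : ∀ i, Relation.ReflTransGen (fun a b => 0 < Γ a b) i k)
    {w : Fin p → ℝ} {e : ℝ} (hw : ∀ i, ∑ j, Γ i j * w j = e)
    {m : Fin p} (hm : ∀ a, w a ≤ w m) : e ≤ 0 ∧ (e = 0 → w k = w m) := by
  have hterms : ∀ a, w a = w m → ∀ l ∈ Finset.univ, Γ a l * (w l - w a) ≤ 0 := by
    intro a ha l _
    rcases eq_or_ne l a with rfl | hne
    · simp
    · exact mul_nonpos_of_nonneg_of_nonpos (hpos a l (Ne.symm hne)) (by rw [ha]; linarith [hm l])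
  have h1 : ∀ a, ∑ l, Γ a l * (w l - w a) = e := fun a => by rw [← sum_sub_eq hrow]; exact hw a
  have he : e ≤ 0 := (h1 m) ▸ Finset.sum_nonpos (hterms m rfl)
  refine ⟨he, fun he0 => ?_⟩
  have step : ∀ a b, 0 < Γ a b → w a = w m → w b = w m := by
    intro a b hab ha
    have hzeroa : ∀ l ∈ Finset.univ, Γ a l * (w l - w a) = 0 := by
      rw [← Finset.sum_eq_zero_iff_of_nonpos (hterms a ha), h1 a, he0]
    have hb : w b - w a = 0 := by
      rcases mul_eq_zero.mp (hzeroa b (Finset.mem_univ b)) with h | h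
      · exact absurd h (ne_of_gt hab)
      · exact h
    rw [← ha]; linarith
  have : ∀ a, Relation.ReflTransGen (fun a b => 0 < Γ a b) m a → w a = w m := by
    intro a h
    induction h with
    | refl => rfl
    | tail _ hbc ih => exact step _ _ hbc ih
  exact this k (hk m)

/-- If `Γ *ᵥ w` is constant, then `w` is constant. -/
lemma connected_const {p : ℕ} {Γ : Matrix (Fin p) (Fin p) ℝ} (hΓ : IsConnectedMatrix Γ)
    {w : Fin p → ℝ} {e : ℝ} (hw : ∀ i, ∑ j, Γ i j * w j = e) (i j : Fin p) : w i = w j := by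
  obtain ⟨hpos, hrow, k, hk⟩ := hΓ
  obtain ⟨m, -, hm⟩ := Finset.exists_max_image Finset.univ w ⟨i, Finset.mem_univ i⟩
  obtain ⟨m', -, hm'⟩ := Finset.exists_min_image Finset.univ w ⟨i, Finset.mem_univ i⟩
  have hmax := aux_max hpos hrow hk hw (m := m) (fun a => hm a (Finset.mem_univ a))
  have hw' : ∀ i, ∑ j, Γ i j * (-w) j = -e := by
    intro i; simp only [Pi.neg_apply, mul_neg, Finset.sum_neg_distrib, hw i]
  have hmin := aux_max hpos hrow hk hw' (m := m')
    (fun a => by simp only [Pi.neg_apply, neg_le_neg_iff]; exact hm' a (Finset.mem_univ a))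
  have he0 : e = 0 := le_antisymm hmax.1 (by linarith [hmin.1])
  have h2 := hmax.2 he0
  have h3 := hmin.2 (by rw [he0, neg_zero])
  simp only [Pi.neg_apply, neg_inj] at h3
  have := hm i (Finset.mem_univ i)
  have := hm' i (Finset.mem_univ i)
  have := hm j (Finset.mem_univ j)
  have := hm' j (Finset.mem_univ j)
  linarith

/-- Key spectral lemma: if `Γ *ᵥ v = c • v + d • 1` over `ℂ` for a nonzero `v`
vanishing somewhere, then `Re c < 0`. -/
lemma key_re_neg {p : ℕ} {Γ : Matrix (Fin p) (Fin p) ℝ} (hΓ : IsConnectedMatrix Γ)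
    {v : Fin p → ℂ} {c d : ℂ} {i0 : Fin p} (hv0 : v i0 = 0) (hv : v ≠ 0)
    (heq : ∀ i, ∑ j, (Γ i j : ℂ) * v j = c * v i + d) : c.re < 0 := by
  obtain ⟨hpos, hrow, -⟩ := id hΓ
  by_contra hre
  push_neg at hre
  rcases eq_or_ne c 0 with rfl | hc
  · -- c = 0 : v is constant, hence 0
    have hconst : ∀ i j, v i = v j := by
      intro i j
      have hRe : ∀ i, ∑ j, Γ i j * (fun l => (v l).re) j = d.re := by
        intro i
        have := congrArg Complex.re (heq i)
        simpa [Complex.add_re, Complex.mul_re] using this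
      have hIm : ∀ i, ∑ j, Γ i j * (fun l => (v l).im) j = d.im := by
        intro i
        have := congrArg Complex.im (heq i)
        simpa [Complex.add_im, Complex.mul_im] using this
      exact Complex.ext (connected_const hΓ hRe i j) (connected_const hΓ hIm i j)
    apply hv
    funext i
    rw [hconst i i0, hv0]; rfl
  · -- c ≠ 0 : Gershgorin
    set u : Fin p → ℂ := fun i => v i + d / c with hu
    have hueq : ∀ i, ∑ j, (Γ i j : ℂ) * u j = c * u i := by
      intro i
      have : ∑ j, (Γ i j : ℂ) * u j = (∑ j, (Γ i j : ℂ) * v j) + (∑ j, (Γ i j : ℂ)) * (d / c) := by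
        simp [hu, mul_add, Finset.sum_add_distrib, Finset.sum_mul]
      rw [this, heq i]
      have : (∑ j, (Γ i j : ℂ)) = 0 := by
        rw [← Complex.ofReal_sum, hrow i, Complex.ofReal_zero]
      rw [this, zero_mul, add_zero, hu]
      have : c * (v i + d / c) = c * v i + d := by field_simp
      rw [this]
    have hune : u ≠ 0 := by
      intro h0
      apply hv
      have hdz : d / c = 0 := by
        have := congrFun h0 i0
        simpa [hu, hv0] using this
      funext i
      have := congrFun h0 i
      simpa [hu, hdz] using this
    set Γc : Matrix (Fin p) (Fin p) ℂ := Γ.map (Complex.ofReal) with hΓc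
    have heig : Module.End.HasEigenvalue (Matrix.toLin' Γc) c := by
      apply Module.End.hasEigenvalue_of_hasEigenvector (x := u)
      refine ⟨Module.End.mem_eigenspace_iff.mpr ?_, hune⟩
      rw [Matrix.toLin'_apply]
      funext i
      simp only [Matrix.mulVec, dotProduct, Pi.smul_apply, smul_eq_mul, hΓc,
        Matrix.map_apply]
      exact hueq i
    obtain ⟨m, hger⟩ := eigenvalue_mem_ball heig
    rw [Metric.mem_closedBall, dist_eq_norm] at hger
    have hR : ∑ j ∈ Finset.univ.erase m, ‖Γc m j‖ = -Γ m m := by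
      have : ∀ j ∈ Finset.univ.erase m, ‖Γc m j‖ = Γ m j := by
        intro j hj
        have hjm : j ≠ m := (Finset.mem_erase.mp hj).1
        simp only [hΓc, Matrix.map_apply, Complex.norm_real]
        exact abs_of_nonneg (hpos m j (Ne.symm hjm))
      rw [Finset.sum_congr rfl this]
      have := hrow m
      have h2 : ∑ j ∈ Finset.univ.erase m, Γ m j = (∑ j, Γ m j) - Γ m m :=
        Finset.sum_erase_eq_sub (Finset.mem_univ m)
      rw [h2, this]; ring
    rw [hR] at hger
    have hcc : (Γc m m) = (Γ m m : ℂ) := rfl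
    rw [hcc] at hger
    have h1 : (c.re - Γ m m)^2 + c.im^2 ≤ (Γ m m)^2 := by
      have hsq : ‖c - (Γ m m : ℂ)‖^2 ≤ (-Γ m m)^2 := by
        apply sq_le_sq' <;> [linarith [norm_nonneg (c - (Γ m m : ℂ))]; exact hger]
      calc (c.re - Γ m m)^2 + c.im^2 = ‖c - (Γ m m : ℂ)‖^2 := by
            rw [Complex.sq_norm, Complex.normSq_apply]
            simp only [Complex.sub_re, Complex.sub_im, Complex.ofReal_re, Complex.ofReal_im,
              sub_zero]
            ring
        _ ≤ (-Γ m m)^2 := hsq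
        _ = (Γ m m)^2 := by ring
    have hRnn : 0 ≤ -Γ m m := by
      have := norm_nonneg (c - (Γ m m : ℂ))
      linarith
    have hsum : c.re^2 + c.im^2 ≤ 0 := by nlinarith [mul_nonneg hre hRnn]
    have hre0 : c.re = 0 := by
      have h2 : c.re^2 ≤ 0 := by nlinarith [sq_nonneg c.im]
      exact sq_eq_zero_iff.mp (le_antisymm h2 (sq_nonneg _))
    have him0 : c.im = 0 := by
      have h2 : c.im^2 ≤ 0 := by nlinarith [sq_nonneg c.re]
      exact sq_eq_zero_iff.mp (le_antisymm h2 (sq_nonneg _))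
    exact hc (Complex.ext (by simp [hre0]) (by simp [him0]))

/- ## The block matrix and its spectrum -/

lemma mulVec_inl {n : ℕ} (G : Matrix (Fin n) (Fin n) ℂ) (a : Fin n ⊕ Fin n → ℂ) (i : Fin n) :
    ((Matrix.fromBlocks 0 1 (-1) G : Matrix (Fin n ⊕ Fin n) (Fin n ⊕ Fin n) ℂ) *ᵥ a)
      (Sum.inl i) = a (Sum.inr i) := by
  rw [Matrix.mulVec]
  simp only [dotProduct, Fintype.sum_sum_type, Matrix.fromBlocks_apply₁₁,
    Matrix.fromBlocks_apply₁₂, Matrix.zero_apply, zero_mul, Finset.sum_const_zero, zero_add,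
    Matrix.one_apply, ite_mul, one_mul, zero_mul]
  rw [Finset.sum_ite_eq]
  simp

lemma mulVec_inr {n : ℕ} (G : Matrix (Fin n) (Fin n) ℂ) (a : Fin n ⊕ Fin n → ℂ) (i : Fin n) :
    ((Matrix.fromBlocks 0 1 (-1) G : Matrix (Fin n ⊕ Fin n) (Fin n ⊕ Fin n) ℂ) *ᵥ a)
      (Sum.inr i) = -(a (Sum.inl i)) + ∑ b, G i b * a (Sum.inr b) := by
  rw [Matrix.mulVec]
  simp only [dotProduct, Fintype.sum_sum_type, Matrix.fromBlocks_apply₂₁,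
    Matrix.fromBlocks_apply₂₂, Matrix.neg_apply, Matrix.one_apply, neg_mul, ite_mul, one_mul,
    zero_mul, neg_zero]
  congr 1
  rw [Finset.sum_neg_distrib, Finset.sum_ite_eq]
  simp

/-- All eigenvalues of the reduced block matrix have negative real part. -/
lemma eig_neg {n : ℕ} {Γ : Matrix (Fin (n+1)) (Fin (n+1)) ℝ} (hΓ : IsConnectedMatrix Γ)
    {μ : ℂ}
    (h : Module.End.HasEigenvalue (Matrix.toLin'
      ((Matrix.fromBlocks 0 1 (-1)
        (Matrix.of (fun i j : Fin n =>
          ((Γ i.castSucc j.castSucc - Γ (Fin.last n) j.castSucc : ℝ) : ℂ))))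
        : Matrix (Fin n ⊕ Fin n) (Fin n ⊕ Fin n) ℂ)) μ) :
    μ.re < 0 := by
  set G : Matrix (Fin n) (Fin n) ℂ := Matrix.of (fun i j : Fin n =>
    ((Γ i.castSucc j.castSucc - Γ (Fin.last n) j.castSucc : ℝ) : ℂ)) with hG
  obtain ⟨z, hz, hzne⟩ := h.exists_hasEigenvector
  have hzeq : ∀ s, (Matrix.fromBlocks 0 1 (-1) G *ᵥ z) s = μ * z s := by
    intro s
    have := Module.End.mem_eigenspace_iff.mp hz
    rw [Matrix.toLin'_apply] at this
    exact congrFun this s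
  have h1 : ∀ i : Fin n, z (Sum.inr i) = μ * z (Sum.inl i) := by
    intro i
    have := hzeq (Sum.inl i)
    rwa [mulVec_inl] at this
  have h2 : ∀ i : Fin n, -z (Sum.inl i) + ∑ j, G i j * z (Sum.inr j) = μ * z (Sum.inr i) := by
    intro i
    have := hzeq (Sum.inr i)
    rwa [mulVec_inr] at this
  have hμ0 : μ ≠ 0 := by
    rintro rfl
    apply hzne
    have hv0 : ∀ i, z (Sum.inr i) = 0 := by intro i; simpa using h1 i
    have hu0 : ∀ i, z (Sum.inl i) = 0 := by
      intro i
      have := h2 i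
      simp only [hv0, mul_zero, Finset.sum_const_zero, add_zero, zero_mul] at this
      linear_combination -this
    funext s
    cases s with
    | inl i => exact hu0 i
    | inr i => exact hv0 i
  have hvne : (fun i => z (Sum.inr i)) ≠ 0 := by
    intro hv0
    apply hzne
    have hv0' : ∀ i, z (Sum.inr i) = 0 := fun i => congrFun hv0 i
    have hu0 : ∀ i, z (Sum.inl i) = 0 := by
      intro i
      have h1i := h1 i
      rw [hv0' i] at h1i
      exact (mul_eq_zero.mp h1i.symm).resolve_left hμ0
    funext s
    cases s with
    | inl i => exact hu0 i
    | inr i => exact hv0' i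
  set c : ℂ := μ + μ⁻¹ with hc
  have h3 : ∀ i : Fin n, ∑ j, G i j * z (Sum.inr j) = c * z (Sum.inr i) := by
    intro i
    have h2i := h2 i
    have h1i : z (Sum.inl i) = μ⁻¹ * z (Sum.inr i) := by
      rw [h1 i, ← mul_assoc, inv_mul_cancel₀ hμ0, one_mul]
    rw [h1i] at h2i
    rw [hc]
    linear_combination h2i
  set vt : Fin (n+1) → ℂ := Fin.snoc (fun i => z (Sum.inr i)) 0 with hvt
  set d : ℂ := ∑ j, (Γ (Fin.last n) j : ℂ) * vt j with hd
  have h4 : ∀ i : Fin (n+1), ∑ j, (Γ i j : ℂ) * vt j = c * vt i + d := by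
    intro i
    induction i using Fin.lastCases with
    | last => simp [hvt, Fin.snoc_last, hd]
    | cast i =>
      have hsplit : ∀ w : Fin (n+1) → ℝ, ∑ j, (w j : ℂ) * vt j
          = ∑ j : Fin n, (w j.castSucc : ℂ) * z (Sum.inr j) := by
        intro w
        rw [Fin.sum_univ_castSucc]
        simp [hvt, Fin.snoc_last, Fin.snoc_castSucc]
      rw [hsplit (fun j => Γ i.castSucc j), hd, hsplit (fun j => Γ (Fin.last n) j)]
      have hlast : vt i.castSucc = z (Sum.inr i) := by simp [hvt, Fin.snoc_castSucc]
      rw [hlast]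
      have h3i := h3 i
      calc ∑ j : Fin n, (Γ i.castSucc j.castSucc : ℂ) * z (Sum.inr j)
          = (∑ j, G i j * z (Sum.inr j))
            + ∑ j : Fin n, (Γ (Fin.last n) j.castSucc : ℂ) * z (Sum.inr j) := by
            rw [← Finset.sum_add_distrib]
            apply Finset.sum_congr rfl
            intro j _
            simp only [hG, Matrix.of_apply]
            push_cast
            ring
        _ = c * z (Sum.inr i)
            + ∑ j : Fin n, (Γ (Fin.last n) j.castSucc : ℂ) * z (Sum.inr j) := by rw [h3i]
  have := key_re_neg hΓ (i0 := Fin.last n) (by simp [hvt, Fin.snoc_last]) ?hne h4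
  case hne =>
    intro h0
    apply hvne
    funext i
    have := congrFun h0 i.castSucc
    simpa [hvt, Fin.snoc_castSucc] using this
  by_contra hre
  push_neg at hre
  have hinv : (μ⁻¹).re = μ.re / Complex.normSq μ := by
    rw [Complex.inv_re]
  have hns : 0 < Complex.normSq μ := Complex.normSq_pos.mpr hμ0
  have : c.re = μ.re + μ.re / Complex.normSq μ := by
    rw [hc, Complex.add_re, hinv]
  nlinarith [div_nonneg hre (le_of_lt hns)]

/- ## Linear ODE facts -/

lemma term_tendsto (n : ℕ) {b : ℝ} (hb : b < 0) :
    Tendsto (fun t : ℝ => t ^ n * Real.exp (b * t)) atTop (nhds 0) := by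
  have h := tendsto_rpow_mul_exp_neg_mul_atTop_nhds_zero (n : ℝ) (-b) (by linarith)
  apply h.congr'
  filter_upwards [eventually_gt_atTop (0:ℝ)] with t ht
  rw [Real.rpow_natCast, neg_neg]

variable {E : Type*} [NormedAddCommGroup E] [NormedSpace ℂ E] [FiniteDimensional ℂ E]

/-- If all eigenvalues of `B` have negative real part then `exp (t • B) v → 0`. -/
lemma decay (B : E →L[ℂ] E)
    (hspec : ∀ μ : ℂ, Module.End.HasEigenvalue (B : E →ₗ[ℂ] E) μ → μ.re < 0) (v : E) :
    Tendsto (fun t : ℝ => exp (t • B) v) atTop (nhds (0 : E)) := by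
  let S : Submodule ℂ E :=
    { carrier := {w | Tendsto (fun t : ℝ => exp (t • B) w) atTop (nhds (0:E))}
      add_mem' := fun {a b} ha hb => by
        simp only [Set.mem_setOf_eq, map_add] at *
        simpa using ha.add hb
      zero_mem' := by simp only [Set.mem_setOf_eq, map_zero]; exact tendsto_const_nhds
      smul_mem' := fun c w hw => by
        simp only [Set.mem_setOf_eq, _root_.map_smul] at *
        simpa using hw.const_smul c }
  have hSle : ⊤ ≤ S := by
    rw [← Module.End.iSup_maxGenEigenspace_eq_top (B : E →ₗ[ℂ] E)]
    apply iSup_le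
    intro μ w hw
    rw [Module.End.mem_maxGenEigenspace] at hw
    obtain ⟨k, hk⟩ := hw
    rcases eq_or_ne w 0 with rfl | hwne
    · exact S.zero_mem
    have heig : Module.End.HasEigenvalue (B : E →ₗ[ℂ] E) μ := by
      apply Module.End.hasEigenvalue_of_hasGenEigenvalue (k := k)
      rw [Module.End.HasGenEigenvalue, Module.End.HasUnifEigenvalue, Submodule.ne_bot_iff]
      exact ⟨w, Module.End.mem_genEigenspace_nat.mpr hk, hwne⟩
    have hμ : μ.re < 0 := hspec μ heig
    set N : E →L[ℂ] E := B - μ • 1 with hN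
    have hNcoe : (N : E →ₗ[ℂ] E) = (B : E →ₗ[ℂ] E) - μ • 1 := by
      ext z; simp [hN]
    have hNk : ∀ n, k ≤ n → (N ^ n) w = 0 := by
      intro n hn
      have h1 : (N ^ k) w = 0 := by
        have : ((N ^ k : E →L[ℂ] E) : E →ₗ[ℂ] E) = ((B : E →ₗ[ℂ] E) - μ • 1) ^ k := by
          rw [← hNcoe]
          exact map_pow (ContinuousLinearMap.toLinearMapRingHom) N k
        calc (N ^ k) w = (((N ^ k : E →L[ℂ] E) : E →ₗ[ℂ] E)) w := rfl
          _ = (((B : E →ₗ[ℂ] E) - μ • 1) ^ k) w := by rw [this]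
          _ = 0 := hk
      have hnk : n - k + k = n := Nat.sub_add_cancel hn
      calc (N ^ n) w = (N ^ (n - k) * N ^ k) w := by rw [← pow_add, hnk]
        _ = (N ^ (n - k)) ((N ^ k) w) := rfl
        _ = 0 := by rw [h1, map_zero]
    have hexp : ∀ t : ℝ, exp (t • B) w
        = Complex.exp ((t : ℂ) * μ)
          • ∑ n ∈ Finset.range k, (n.factorial : ℝ)⁻¹ • t ^ n • (N ^ n) w := by
      intro t
      have hsplit : t • B = t • (μ • (1 : E →L[ℂ] E)) + t • N := by
        rw [← smul_add]
        congr 1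
        simp [hN]
      have hcomm : Commute (t • (μ • (1 : E →L[ℂ] E))) (t • N) := by
        apply Commute.smul_left
        apply Commute.smul_right
        rw [Algebra.smul_def μ 1, mul_one]
        exact Algebra.commute_algebraMap_left μ N
      have h1 : exp (t • B) = exp (t • (μ • (1 : E →L[ℂ] E))) * exp (t • N) := by
        rw [hsplit, NormedSpace.exp_add_of_commute_of_mem_ball (𝕂 := ℝ) hcomm ((NormedSpace.expSeries_radius_eq_top ℝ (E →L[ℂ] E)).symm ▸ edist_lt_top _ _) ((NormedSpace.expSeries_radius_eq_top ℝ (E →L[ℂ] E)).symm ▸ edist_lt_top _ _)]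
      have h2 : exp (t • (μ • (1 : E →L[ℂ] E))) = Complex.exp ((t : ℂ) * μ) • 1 := by
        have e1 : t • (μ • (1 : E →L[ℂ] E)) = ((t : ℂ) * μ) • (1 : E →L[ℂ] E) := by
          rw [← Complex.real_smul, smul_assoc]
        rw [e1, ← Algebra.algebraMap_eq_smul_one, ← algebraMap_exp_comm,
          Complex.exp_eq_exp_ℂ, Algebra.algebraMap_eq_smul_one]
      have h3 : exp (t • N) w
          = ∑ n ∈ Finset.range k, (n.factorial : ℝ)⁻¹ • t ^ n • (N ^ n) w := by
        rw [exp_eq_tsum ℝ]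
        have happ : (∑' n : ℕ, (n.factorial : ℝ)⁻¹ • (t • N) ^ n) w
            = ∑' n : ℕ, ((n.factorial : ℝ)⁻¹ • (t • N) ^ n) w :=
          (ContinuousLinearMap.apply ℂ E w).map_tsum (expSeries_summable' (𝕂 := ℝ) (t • N))
        rw [happ]
        rw [tsum_eq_sum (s := Finset.range k) ?h]
        · apply Finset.sum_congr rfl
          intro n _
          simp [smul_pow, ContinuousLinearMap.smul_apply]
        · intro n hn
          rw [Finset.mem_range, not_lt] at hn
          simp [smul_pow, ContinuousLinearMap.smul_apply, hNk n hn]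
      calc exp (t • B) w = exp (t • (μ • (1 : E →L[ℂ] E))) (exp (t • N) w) := by
            rw [h1]; rfl
        _ = Complex.exp ((t : ℂ) * μ) • (exp (t • N) w) := by
            rw [h2, ContinuousLinearMap.smul_apply, ContinuousLinearMap.one_apply]
        _ = _ := by rw [h3]
    show Tendsto (fun t : ℝ => exp (t • B) w) atTop (nhds (0:E))
    apply squeeze_zero_norm' (a := fun t : ℝ => ∑ n ∈ Finset.range k,
      ((n.factorial : ℝ)⁻¹ * ‖(N ^ n) w‖) * (t ^ n * Real.exp (μ.re * t)))
    · filter_upwards [eventually_ge_atTop (0:ℝ)] with t ht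
      rw [hexp t, norm_smul]
      have habs : ‖Complex.exp ((t:ℂ)*μ)‖ = Real.exp (μ.re * t) := by
        rw [Complex.norm_exp]
        congr 1
        simp only [Complex.mul_re, Complex.ofReal_re, Complex.ofReal_im, zero_mul, sub_zero]
        ring
      rw [habs]
      calc Real.exp (μ.re*t) * ‖∑ n ∈ Finset.range k, (n.factorial : ℝ)⁻¹ • t ^ n • (N ^ n) w‖
          ≤ Real.exp (μ.re*t) * ∑ n ∈ Finset.range k,
            (n.factorial : ℝ)⁻¹ * ‖(N ^ n) w‖ * t ^ n := by
            apply mul_le_mul_of_nonneg_left _ (Real.exp_nonneg _)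
            refine (norm_sum_le _ _).trans ?_
            apply Finset.sum_le_sum
            intro n _
            rw [norm_smul, norm_smul]
            rw [norm_inv, Real.norm_natCast, norm_pow, Real.norm_eq_abs, abs_of_nonneg ht]
            ring_nf
            exact le_refl _
        _ = ∑ n ∈ Finset.range k,
            ((n.factorial : ℝ)⁻¹ * ‖(N ^ n) w‖) * (t ^ n * Real.exp (μ.re * t)) := by
            rw [Finset.mul_sum]
            apply Finset.sum_congr rfl
            intro n _
            ring
    · have h0 : (0:ℝ) = ∑ _n ∈ Finset.range k, (0:ℝ) := by simp
      rw [h0]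
      apply tendsto_finset_sum
      intro n _
      simpa using ((term_tendsto n hμ).const_mul ((n.factorial:ℝ)⁻¹ * ‖(N^n) w‖))
  exact hSle Submodule.mem_top

/-- Uniqueness for the linear ODE `w' = B w`. -/
lemma ode_unique (B : E →L[ℂ] E) (w : ℝ → E)
    (hw : ∀ t, HasDerivAt w (B (w t)) t) (t : ℝ) : w t = exp (t • B) (w 0) := by
  set L : (E →L[ℂ] E) →L[ℝ] (E →L[ℝ] E) := ContinuousLinearMap.restrictScalarsL ℂ E E ℝ ℝ with hL
  have hc : ∀ s : ℝ, HasDerivAt (fun u : ℝ => L (exp (-(u • B))))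
      (L (-(exp (-(s • B)) * B))) s := by
    intro s
    apply (L.hasFDerivAt.comp_hasDerivAt s)
    have h1 : HasDerivAt (fun u : ℝ => exp (u • B)) (exp ((-s) • B) * B) (-s) :=
      hasDerivAt_exp_smul_const B (-s)
    have h2 : HasDerivAt (fun u : ℝ => -u) (-1 : ℝ) s := by
      exact hasDerivAt_neg' s
    have h3 := h1.scomp s h2
    have hfun : ((fun u : ℝ => exp (u • B)) ∘ Neg.neg) = fun u : ℝ => exp (-(u • B)) := by
      funext u
      simp [neg_smul]
    rw [hfun] at h3
    simpa using h3
  have hg : ∀ s : ℝ, HasDerivAt (fun u : ℝ => L (exp (-(u • B))) (w u)) 0 s := by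
    intro s
    have h := (hc s).clm_apply (hw s)
    have hz : L (-(exp (-(s • B)) * B)) (w s) + L (exp (-(s • B))) (B (w s)) = 0 := by
      show (-(exp (-(s • B)) * B)) (w s) + (exp (-(s • B))) (B (w s)) = 0
      rw [ContinuousLinearMap.neg_apply, ContinuousLinearMap.mul_apply]
      exact neg_add_cancel _
    rwa [hz] at h
  have hconst : L (exp (-(t • B))) (w t) = L (exp (-((0:ℝ) • B))) (w 0) :=
    is_const_of_deriv_eq_zero (fun u => (hg u).differentiableAt) (fun u => (hg u).deriv) t 0
  have h0 : L (exp (-((0:ℝ) • B))) (w 0) = w 0 := by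
    show (exp (-((0:ℝ) • B))) (w 0) = w 0
    norm_num [exp_zero]
  rw [h0] at hconst
  have hinv : exp (t • B) * exp (-(t • B)) = 1 := by
    rw [← NormedSpace.exp_add_of_commute_of_mem_ball (𝕂 := ℝ) ((Commute.refl (t • B)).neg_right) ((NormedSpace.expSeries_radius_eq_top ℝ (E →L[ℂ] E)).symm ▸ edist_lt_top _ _) ((NormedSpace.expSeries_radius_eq_top ℝ (E →L[ℂ] E)).symm ▸ edist_lt_top _ _)]
    norm_num [exp_zero]
  calc w t = (exp (t • B) * exp (-(t • B))) (w t) := by rw [hinv]; rfl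
    _ = exp (t • B) (L (exp (-(t • B))) (w t)) := rfl
    _ = exp (t • B) (w 0) := by rw [hconst]

/-- Coupled harmonic oscillators ẋᵢ = yᵢ, ẏᵢ = −xᵢ + Σⱼ γᵢⱼ(yⱼ − yᵢ) synchronize
for all connected Γ. -/
theorem stmt16 {p : ℕ} (Γ : Matrix (Fin p) (Fin p) ℝ) (hΓ : IsConnectedMatrix Γ)
    (x y : ℝ → Fin p → ℝ)
    (hx : ∀ i t, HasDerivAt (fun s => x s i) (y t i) t)
    (hy : ∀ i t, HasDerivAt (fun s => y s i)
      (-(x t i) + ∑ j, Γ i j * (y t j - y t i)) t) :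
    ∀ i j, Tendsto (fun t => |x t i - x t j| + |y t i - y t j|) atTop (nhds 0) := by
  rcases p with - | n
  · intro i
    exact i.elim0
  have hrow := hΓ.2.1
  set l : Fin (n+1) := Fin.last n with hl
  set G : Matrix (Fin n) (Fin n) ℂ := Matrix.of (fun a b : Fin n =>
    ((Γ a.castSucc b.castSucc - Γ (Fin.last n) b.castSucc : ℝ) : ℂ)) with hG
  set M : Matrix (Fin n ⊕ Fin n) (Fin n ⊕ Fin n) ℂ := Matrix.fromBlocks 0 1 (-1) G with hM
  set B : ((Fin n ⊕ Fin n) → ℂ) →L[ℂ] ((Fin n ⊕ Fin n) → ℂ) :=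
    LinearMap.toContinuousLinearMap (Matrix.toLin' M) with hB
  set z : ℝ → (Fin n ⊕ Fin n) → ℂ := fun t => Sum.elim
    (fun a => ((x t a.castSucc - x t l : ℝ) : ℂ))
    (fun a => ((y t a.castSucc - y t l : ℝ) : ℂ)) with hz
  have hBapp : ∀ (a : (Fin n ⊕ Fin n) → ℂ), B a = M *ᵥ a := by
    intro a
    rw [hB]
    rw [LinearMap.coe_toContinuousLinearMap']
    rw [Matrix.toLin'_apply]
  -- the difference vector satisfies the reduced linear ODE
  have hderiv : ∀ t, HasDerivAt z (B (z t)) t := by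
    intro t
    rw [hasDerivAt_pi]
    intro s
    cases s with
    | inl a =>
      have hval : (B (z t)) (Sum.inl a) = ((y t a.castSucc - y t l : ℝ) : ℂ) := by
        rw [hBapp, hM, mulVec_inl]
        rfl
      rw [hval]
      exact ((hx a.castSucc t).sub (hx l t)).ofReal_comp
    | inr a =>
      have hreal : (-(x t a.castSucc) + ∑ j, Γ a.castSucc j * (y t j - y t a.castSucc))
          - (-(x t l) + ∑ j, Γ l j * (y t j - y t l))
          = -(x t a.castSucc - x t l)
            + ∑ b : Fin n, (Γ a.castSucc b.castSucc - Γ l b.castSucc) * (y t b.castSucc - y t l) := by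
        have e1 : ∀ i : Fin (n+1), ∑ j, Γ i j * (y t j - y t i) = ∑ j, Γ i j * (y t j - y t l) := by
          intro i
          rw [sum_sub_eq' hrow (y t) i (y t i), sum_sub_eq' hrow (y t) i (y t l)]
        rw [e1 a.castSucc]
        have e2 : ∑ b : Fin n, (Γ a.castSucc b.castSucc - Γ l b.castSucc) * (y t b.castSucc - y t l)
            = ∑ j : Fin (n+1), (Γ a.castSucc j - Γ l j) * (y t j - y t l) := by
          rw [Fin.sum_univ_castSucc]
          simp [hl]
        rw [e2]
        rw [Finset.sum_congr rfl (fun j _ => sub_mul (Γ a.castSucc j) (Γ l j) (y t j - y t l)),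
          Finset.sum_sub_distrib]
        ring
      have hval : (B (z t)) (Sum.inr a)
          = (((-(x t a.castSucc) + ∑ j, Γ a.castSucc j * (y t j - y t a.castSucc))
          - (-(x t l) + ∑ j, Γ l j * (y t j - y t l)) : ℝ) : ℂ) := by
        rw [hBapp, hM, mulVec_inr, hreal]
        push_cast
        have : ∀ b : Fin n, G a b * z t (Sum.inr b)
            = ((Γ a.castSucc b.castSucc : ℂ) - (Γ l b.castSucc : ℂ))
              * ((y t b.castSucc : ℂ) - (y t l : ℂ)) := by
          intro b
          simp only [hG, Matrix.of_apply, hz, Sum.elim_inr]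
          push_cast
          ring
        rw [Finset.sum_congr rfl (fun b _ => this b)]
        simp only [hz, Sum.elim_inl]
        push_cast
        ring
      rw [hval]
      exact ((hy a.castSucc t).sub (hy l t)).ofReal_comp
  -- hence it is given by the exponential, and tends to 0
  have heigB : ∀ μ : ℂ, Module.End.HasEigenvalue
      (B : ((Fin n ⊕ Fin n) → ℂ) →ₗ[ℂ] ((Fin n ⊕ Fin n) → ℂ)) μ → μ.re < 0 := by
    intro μ hμ
    apply eig_neg hΓ (μ := μ)
    rwa [hB, LinearMap.coe_toContinuousLinearMap] at hμ
  have hz0 : Tendsto z atTop (nhds 0) := by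
    have := decay B heigB (z 0)
    apply this.congr
    intro t
    exact (ode_unique B z hderiv t).symm
  have hcomp : ∀ s, Tendsto (fun t => z t s) atTop (nhds 0) := by
    intro s
    have := tendsto_pi_nhds.mp hz0 s
    simpa using this
  have hxlim : ∀ a : Fin (n+1), Tendsto (fun t => x t a - x t l) atTop (nhds 0) := by
    intro a
    induction a using Fin.lastCases with
    | last => simpa [hl] using (tendsto_const_nhds : Tendsto (fun _ : ℝ => (0:ℝ)) atTop (nhds 0))
    | cast a =>
      have h := (Complex.continuous_re.tendsto 0).comp (hcomp (Sum.inl a))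
      simpa [hz, Function.comp_def] using h
  have hylim : ∀ a : Fin (n+1), Tendsto (fun t => y t a - y t l) atTop (nhds 0) := by
    intro a
    induction a using Fin.lastCases with
    | last => simpa [hl] using (tendsto_const_nhds : Tendsto (fun _ : ℝ => (0:ℝ)) atTop (nhds 0))
    | cast a =>
      have h := (Complex.continuous_re.tendsto 0).comp (hcomp (Sum.inr a))
      simpa [hz, Function.comp_def] using h
  intro i j
  have h1 : Tendsto (fun t => x t i - x t j) atTop (nhds 0) := by
    have := (hxlim i).sub (hxlim j)
    simp only [sub_sub_sub_cancel_right, sub_zero] at this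
    simpa using this
  have h2 : Tendsto (fun t => y t i - y t j) atTop (nhds 0) := by
    have := (hylim i).sub (hylim j)
    simp only [sub_sub_sub_cancel_right, sub_zero] at this
    simpa using this
  have := (h1.abs).add (h2.abs)
  simpa using this
end
end

section
/- Let S be skew-symmetric with (H,S) observable, and suppose a solution η of η̇ = (I_p ⊗ S + Γ ⊗ HᵀH)η satisfies (I_p ⊗ H)η(t) = 0 for all t in a nondegenerate interval [τ, τ+δ] and ((I_p − 𝟙rᵀ) ⊗ I_n)η(t) ≠ 0 somewhere there. Then a contradiction follows; hence on any invariant set where ηᵀ(Q̂ ⊗ HᵀH)η ≡ 0 with Q positive definite, one has ((I_p − 𝟙rᵀ) ⊗ I_n)η(t) = 0 for all t. -/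
open Matrix NormedSpace Filter
open scoped Kronecker

noncomputable section

/-- (H, S) is observable: the kernel of the stacked observability matrix is trivial. -/
def Observable {m n : ℕ} (H : Matrix (Fin m) (Fin n) ℝ) (S : Matrix (Fin n) (Fin n) ℝ) : Prop :=
  ∀ v : Fin n → ℝ, (∀ k < n, H *ᵥ (S ^ k *ᵥ v) = 0) → v = 0

/-- If a solution η of η̇ = (I_p ⊗ S + Γ ⊗ HᵀH)η satisfies (I_p ⊗ H)η ≡ 0 on a
nondegenerate interval while ((I_p − 𝟙rᵀ) ⊗ I_n)η does not vanish somewhere on that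
interval, a contradiction follows. -/
theorem stmt17 {p n m : ℕ} (S : Matrix (Fin n) (Fin n) ℝ) (hS : Sᵀ = -S)
    (H : Matrix (Fin m) (Fin n) ℝ) (hHS : Observable H S)
    (Γ : Matrix (Fin p) (Fin p) ℝ) (r : Fin p → ℝ)
    (hrΓ : r ᵥ* Γ = 0) (hr1 : ∑ i, r i = 1)
    (η : ℝ → Fin p × Fin n → ℝ)
    (hη : ∀ t, HasDerivAt η
      (((1 : Matrix (Fin p) (Fin p) ℝ) ⊗ₖ S + Γ ⊗ₖ (Hᵀ * H)) *ᵥ η t) t)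
    (τ δ : ℝ) (hδ : 0 < δ)
    (hzero : ∀ t ∈ Set.Icc τ (τ + δ),
      ((1 : Matrix (Fin p) (Fin p) ℝ) ⊗ₖ H) *ᵥ η t = 0)
    (hne : ∃ t ∈ Set.Icc τ (τ + δ),
      (((1 : Matrix (Fin p) (Fin p) ℝ) - vecMulVec (ones p) r) ⊗ₖ
        (1 : Matrix (Fin n) (Fin n) ℝ)) *ᵥ η t ≠ 0) :
    False := by
  classical
  set A := ((1 : Matrix (Fin p) (Fin p) ℝ) ⊗ₖ S + Γ ⊗ₖ (Hᵀ * H)) with hA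
  have hcont : Continuous η := by
    rw [continuous_iff_continuousAt]; exact fun t => (hη t).continuousAt
  -- blockwise H η = 0 on the interval
  have hzero' : ∀ t ∈ Set.Icc τ (τ + δ), ∀ i, H *ᵥ (fun j => η t (i, j)) = 0 := by
    intro t ht i
    funext a
    have h := congrFun (hzero t ht) (i, a)
    simp only [Matrix.mulVec, dotProduct, Fintype.sum_prod_type,
      Matrix.kroneckerMap_apply, Matrix.one_apply, ite_mul, one_mul, zero_mul,
      Pi.zero_apply] at h ⊢
    simpa [Finset.sum_ite_eq] using h
  -- the vector field restricted to a block, on the interval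
  have hvec : ∀ t ∈ Set.Icc τ (τ + δ), ∀ i,
      (fun j => (A *ᵥ η t) (i, j)) = S *ᵥ (fun j => η t (i, j)) := by
    intro t ht i
    funext j
    have h1 : ∀ k, ∑ l, (Hᵀ * H) j l * η t (k, l) = 0 := by
      intro k
      have h0 : (Hᵀ * H) *ᵥ (fun l => η t (k, l)) = 0 := by
        rw [← Matrix.mulVec_mulVec, hzero' t ht k, Matrix.mulVec_zero]
      simpa [Matrix.mulVec, dotProduct] using congrFun h0 j
    have expand : (A *ᵥ η t) (i, j)
        = (((1 : Matrix (Fin p) (Fin p) ℝ) ⊗ₖ S) *ᵥ η t) (i, j)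
          + ((Γ ⊗ₖ (Hᵀ * H)) *ᵥ η t) (i, j) := by
      rw [hA, Matrix.add_mulVec]; rfl
    have e1 : (((1 : Matrix (Fin p) (Fin p) ℝ) ⊗ₖ S) *ᵥ η t) (i, j)
        = (S *ᵥ fun l => η t (i, l)) j := by
      simp [Matrix.mulVec, dotProduct, Fintype.sum_prod_type, Matrix.one_apply,
        ite_mul, one_mul, zero_mul, Finset.sum_ite_irrel, Finset.sum_ite_eq]
    have e2 : ((Γ ⊗ₖ (Hᵀ * H)) *ᵥ η t) (i, j) = 0 := by
      have h3 : ((Γ ⊗ₖ (Hᵀ * H)) *ᵥ η t) (i, j)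
          = ∑ x, Γ i x * ∑ y, (Hᵀ * H) j y * η t (x, y) := by
        simp [Matrix.mulVec, dotProduct, Fintype.sum_prod_type, Finset.mul_sum, mul_assoc]
      rw [h3]
      simp [h1]
    rw [expand, e1, e2, add_zero]
  -- key induction: all observability products vanish on the open interval
  have key : ∀ k : ℕ, ∀ t ∈ Set.Ioo τ (τ + δ), ∀ i,
      (H * S ^ k) *ᵥ (fun j => η t (i, j)) = 0 := by
    intro k
    induction k with
    | zero =>
      intro t ht i
      simpa using hzero' t (Set.Ioo_subset_Icc_self ht) i
    | succ k ih =>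
      intro t ht i
      set L : (Fin p × Fin n → ℝ) →L[ℝ] (Fin m → ℝ) :=
        LinearMap.toContinuousLinearMap
          (((H * S ^ k).mulVecLin).comp (LinearMap.funLeft ℝ ℝ fun j => (i, j))) with hL
      have hLapp : ∀ v : Fin p × Fin n → ℝ, L v = (H * S ^ k) *ᵥ (fun j => v (i, j)) := by
        intro v; simp [hL, Matrix.mulVecLin_apply, LinearMap.funLeft]; rfl
      have hLd : HasDerivAt (fun s => L (η s)) (L (A *ᵥ η t)) t :=
        L.hasFDerivAt.comp_hasDerivAt t (hη t)
      have heq : (fun s => L (η s)) =ᶠ[nhds t] (fun _ => (0 : Fin m → ℝ)) := by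
        filter_upwards [Ioo_mem_nhds ht.1 ht.2] with s hs
        rw [hLapp]; exact ih s hs i
      have hLd0 : HasDerivAt (fun s => L (η s)) 0 t :=
        (hasDerivAt_const t (0 : Fin m → ℝ)).congr_of_eventuallyEq heq
      have hz : L (A *ᵥ η t) = 0 := hLd.unique hLd0
      rw [hLapp, hvec t (Set.Ioo_subset_Icc_self ht) i] at hz
      calc (H * S ^ (k + 1)) *ᵥ (fun j => η t (i, j))
          = (H * S ^ k) *ᵥ (S *ᵥ (fun j => η t (i, j))) := by
            rw [Matrix.mulVec_mulVec, pow_succ, Matrix.mul_assoc]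
        _ = 0 := hz
  -- observability gives η = 0 on the open interval
  have hηIoo : ∀ t ∈ Set.Ioo τ (τ + δ), η t = 0 := by
    intro t ht
    funext x
    obtain ⟨i, j⟩ := x
    have h := hHS (fun j => η t (i, j)) (fun k _ => by
      rw [Matrix.mulVec_mulVec]; exact key k t ht i)
    exact congrFun h j
  -- extend to closed interval by continuity
  have hicc : Set.EqOn η (fun _ => 0) (Set.Icc τ (τ + δ)) := by
    have hcl : closure (Set.Ioo τ (τ + δ)) = Set.Icc τ (τ + δ) :=
      closure_Ioo (by linarith)
    rw [← hcl]
    exact Set.EqOn.closure (fun t ht => hηIoo t ht) hcont continuous_const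
  obtain ⟨t, ht, hnz⟩ := hne
  exact hnz (by rw [hicc ht, Matrix.mulVec_zero])
end
end

section
/- If (C, A) is detectable, [U W]^{-1}A[U W] = diag(F, G) with F having purely imaginary semisimple eigenvalues and G Hurwitz, P is symmetric positive definite with PF + FᵀP = 0, and H := CUP^{-1/2}, S := P^{1/2}FP^{-1/2}, then the pair (H, S) is observable. -/
open Matrix NormedSpace Filter
open scoped Kronecker

noncomputable section

lemma myExpSummable {p : Type*} [Fintype p] [DecidableEq p] (A : Matrix p p ℝ) :
    Summable fun k : ℕ => ((k.factorial : ℝ)⁻¹) • A ^ k := by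
  letI : SeminormedRing (Matrix p p ℝ) := Matrix.linftyOpSemiNormedRing
  letI : NormedRing (Matrix p p ℝ) := Matrix.linftyOpNormedRing
  letI : NormedAlgebra ℝ (Matrix p p ℝ) := Matrix.linftyOpNormedAlgebra
  exact NormedSpace.expSeries_summable' (𝕂 := ℝ) A

lemma myExpHasSum {p : Type*} [Fintype p] [DecidableEq p] (A : Matrix p p ℝ) :
    HasSum (fun k : ℕ => ((k.factorial : ℝ)⁻¹) • A ^ k) (exp A) := by
  have := (myExpSummable A).hasSum
  rwa [NormedSpace.exp_eq_tsum (𝕂 := ℝ)]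

lemma myExpMulComm {p q : Type*} [Fintype p] [DecidableEq p] [Fintype q] [DecidableEq q]
    (A : Matrix p p ℝ) (B : Matrix q q ℝ) (X : Matrix p q ℝ) (h : A * X = X * B) :
    exp A * X = X * exp B := by
  have hpow : ∀ k : ℕ, A ^ k * X = X * B ^ k := by
    intro k
    induction k with
    | zero => simp
    | succ k ih => rw [pow_succ, pow_succ, Matrix.mul_assoc, h, ← Matrix.mul_assoc, ih,
        Matrix.mul_assoc]
  have h1 : HasSum (fun k : ℕ => ((k.factorial : ℝ)⁻¹) • A ^ k * X) (exp A * X) :=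
    (myExpHasSum A).map (AddMonoidHom.mk' (fun M : Matrix p p ℝ => M * X)
      (fun a b => Matrix.add_mul a b X)) (continuous_id.matrix_mul continuous_const)
  have h2 : HasSum (fun k : ℕ => X * (((k.factorial : ℝ)⁻¹) • B ^ k)) (X * exp B) :=
    (myExpHasSum B).map (AddMonoidHom.mk' (fun M : Matrix q q ℝ => X * M)
      (fun a b => Matrix.mul_add X a b)) (continuous_const.matrix_mul continuous_id)
  refine h1.unique ?_
  convert h2 using 2 with k
  rw [Matrix.smul_mul, hpow, Matrix.mul_smul]


/-- If (C,A) is detectable, [U W]⁻¹A[U W] = diag(F,G) with F purely imaginary semisimple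
and G Hurwitz, PF + FᵀP = 0 with P symmetric positive definite, R = P^{1/2}, then the pair
(H, S) = (C U R⁻¹, R F R⁻¹) is observable. -/
theorem stmt19 {n n₁ n₂ m : ℕ} (A : Matrix (Fin n) (Fin n) ℝ) (C : Matrix (Fin m) (Fin n) ℝ)
    (hdet : ∀ v : Fin n → ℝ,
      (∀ t : ℝ, 0 ≤ t → C *ᵥ (NormedSpace.exp (t • A) *ᵥ v) = 0) →
        Tendsto (fun t : ℝ => NormedSpace.exp (t • A) *ᵥ v) atTop (nhds 0))
    (U : Matrix (Fin n) (Fin n₁) ℝ) (W : Matrix (Fin n) (Fin n₂) ℝ)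
    (V : Matrix (Fin n₁ ⊕ Fin n₂) (Fin n) ℝ)
    (hVinv : V * fromCols U W = 1) (hinvV : fromCols U W * V = 1)
    (F : Matrix (Fin n₁) (Fin n₁) ℝ) (G : Matrix (Fin n₂) (Fin n₂) ℝ)
    (hblock : V * A * fromCols U W = fromBlocks F 0 0 G)
    (hF : ∀ μ ∈ spectrum ℂ (F.map Complex.ofReal), μ.re = 0)
    (hFsemisimple : ∀ μ ∈ spectrum ℂ (F.map Complex.ofReal),
      ∀ v : Fin n₁ → ℂ,
        (F.map Complex.ofReal - μ • 1) *ᵥ ((F.map Complex.ofReal - μ • 1) *ᵥ v) = 0 →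
          (F.map Complex.ofReal - μ • 1) *ᵥ v = 0)
    (hG : ∀ μ ∈ spectrum ℂ (G.map Complex.ofReal), μ.re < 0)
    (P : Matrix (Fin n₁) (Fin n₁) ℝ) (hP : P.PosDef) (hlyap : P * F + Fᵀ * P = 0)
    (R : Matrix (Fin n₁) (Fin n₁) ℝ) (hR : R.PosDef) (hRR : R * R = P) :
    ∀ v : Fin n₁ → ℝ,
      (∀ k < n₁, (C * U * R⁻¹) *ᵥ ((R * F * R⁻¹) ^ k *ᵥ v) = 0) → v = 0 := by
  intro v hv
  -- invertibility of R
  have hRdet : IsUnit R.det := isUnit_iff_ne_zero.mpr hR.det_pos.ne'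
  have hRinvR : R⁻¹ * R = 1 := Matrix.nonsing_inv_mul R hRdet
  have hRRinv : R * R⁻¹ = 1 := Matrix.mul_nonsing_inv R hRdet
  set w : Fin n₁ → ℝ := R⁻¹ *ᵥ v with hw
  have hvRw : R *ᵥ w = v := by rw [hw, Matrix.mulVec_mulVec, hRRinv, Matrix.one_mulVec]
  -- conjugated powers
  have hconj : ∀ k : ℕ, (R * F * R⁻¹) ^ k = R * F ^ k * R⁻¹ := by
    intro k
    induction k with
    | zero => simpa using hRRinv.symm
    | succ k ih =>
      rw [pow_succ, pow_succ, ih]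
      simp only [Matrix.mul_assoc]
      rw [← Matrix.mul_assoc R⁻¹ R (F * R⁻¹), hRinvR, Matrix.one_mul]
  -- the linear functional
  let Φ : Matrix (Fin n₁) (Fin n₁) ℝ →ₗ[ℝ] (Fin m → ℝ) :=
    { toFun := fun N => (C * U) *ᵥ (N *ᵥ w)
      map_add' := fun a b => by simp [Matrix.add_mulVec, Matrix.mulVec_add]
      map_smul' := fun c a => by simp [Matrix.smul_mulVec, Matrix.mulVec_smul] }
  -- base case from the hypothesis
  have hbase : ∀ k < n₁, Φ (F ^ k) = 0 := by
    intro k hk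
    have h := hv k hk
    rw [hconj] at h
    show (C * U) *ᵥ (F ^ k *ᵥ w) = 0
    rw [hw]
    simp only [Matrix.mulVec_mulVec] at h ⊢
    convert h using 2
    simp only [Matrix.mul_assoc]
    rw [← Matrix.mul_assoc R⁻¹ R (F ^ k * R⁻¹), hRinvR, Matrix.one_mul]
  -- Cayley–Hamilton
  have hCH : F ^ n₁ = -(∑ i ∈ Finset.range n₁, F.charpoly.coeff i • F ^ i) := by
    have h0 := Matrix.aeval_self_charpoly F
    rw [Polynomial.aeval_eq_sum_range] at h0
    have hdeg : F.charpoly.natDegree = n₁ := by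
      simpa using F.charpoly_natDegree_eq_dim
    rw [hdeg, Finset.sum_range_succ] at h0
    have hlead : F.charpoly.coeff n₁ = 1 := by
      have hm := (F.charpoly_monic).coeff_natDegree
      rwa [hdeg] at hm
    rw [hlead, one_smul] at h0
    exact eq_neg_of_add_eq_zero_right h0
  -- all powers
  have hall : ∀ k : ℕ, Φ (F ^ k) = 0 := by
    intro k
    induction k using Nat.strong_induction_on with
    | _ k ih =>
      rcases lt_or_ge k n₁ with hk | hk
      · exact hbase k hk
      · obtain ⟨j, rfl⟩ : ∃ j, k = n₁ + j := ⟨k - n₁, (Nat.add_sub_cancel' hk).symm⟩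
        have e1 : F ^ (n₁ + j) =
            -(∑ i ∈ Finset.range n₁, F.charpoly.coeff i • F ^ (i + j)) := by
          rw [pow_add, hCH, Matrix.neg_mul, Finset.sum_mul]
          congr 1
          refine Finset.sum_congr rfl fun i _ => ?_
          rw [Matrix.smul_mul, pow_add]
        rw [e1, map_neg, map_sum, neg_eq_zero]
        refine Finset.sum_eq_zero fun i hi => ?_
        rw [LinearMap.map_smul, ih (i + j) (by
          have : i < n₁ := Finset.mem_range.mp hi
          omega), smul_zero]
  -- exp vanishing
  have hΦcont : Continuous Φ := Φ.continuous_of_finiteDimensional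
  have hΦexp : ∀ t : ℝ, Φ (exp (t • F)) = 0 := by
    intro t
    have hs := (myExpHasSum (t • F)).map Φ.toAddMonoidHom hΦcont
    have hz : (Φ.toAddMonoidHom ∘ fun k : ℕ => ((k.factorial : ℝ)⁻¹) • (t • F) ^ k) =
        fun _ : ℕ => (0 : Fin m → ℝ) := by
      funext k
      show Φ (((k.factorial : ℝ)⁻¹) • (t • F) ^ k) = 0
      rw [smul_pow, LinearMap.map_smul, LinearMap.map_smul, hall k, smul_zero, smul_zero]
    rw [hz] at hs
    exact hs.unique hasSum_zero
  -- A [U W] = [U W] diag(F,G)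
  have hAT : A * fromCols U W = fromCols U W * fromBlocks F 0 0 G := by
    have h1 : fromCols U W * (V * A * fromCols U W) =
        fromCols U W * fromBlocks F 0 0 G := by rw [hblock]
    simp only [← Matrix.mul_assoc] at h1
    rwa [hinvV, Matrix.one_mul] at h1
  have hAU : A * U = U * F := by
    have h2 := hAT
    rw [Matrix.mul_fromCols, Matrix.fromCols_mul_fromBlocks] at h2
    have h3 := (Matrix.fromCols_inj h2).1
    simpa using h3
  have hexpAU : ∀ t : ℝ, exp (t • A) * U = U * exp (t • F) := fun t =>
    myExpMulComm _ _ _ (by rw [Matrix.smul_mul, hAU, Matrix.mul_smul])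
  have hC0 : ∀ t : ℝ, 0 ≤ t → C *ᵥ (exp (t • A) *ᵥ (U *ᵥ w)) = 0 := by
    intro t _
    have h2 : exp (t • A) *ᵥ (U *ᵥ w) = U *ᵥ (exp (t • F) *ᵥ w) := by
      rw [Matrix.mulVec_mulVec, hexpAU, ← Matrix.mulVec_mulVec]
    rw [h2, Matrix.mulVec_mulVec]
    exact hΦexp t
  have hlim := hdet (U *ᵥ w) hC0
  -- left inverse of U
  set L : Matrix (Fin n₁) (Fin n) ℝ := V.submatrix Sum.inl id with hLdef
  have hLU : L * U = 1 := by
    ext i j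
    have h := Matrix.ext_iff.mpr hVinv (Sum.inl i) (Sum.inl j)
    simpa [Matrix.mul_apply, hLdef, Matrix.fromCols, Matrix.one_apply] using h
  -- skew symmetry of S = R F R⁻¹
  set S : Matrix (Fin n₁) (Fin n₁) ℝ := R * F * R⁻¹ with hS
  have hRsym : Rᵀ = R := by
    have h : Rᴴ = R := hR.1
    rwa [Matrix.conjTranspose_eq_transpose_of_trivial] at h
  have hFP : Fᵀ * (R * R) = -(R * R * F) := by
    rw [hRR]
    exact eq_neg_of_add_eq_zero_left (by rwa [add_comm] at hlyap)
  have hST : Sᵀ = -S := by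
    rw [hS, Matrix.transpose_mul, Matrix.transpose_mul, Matrix.transpose_nonsing_inv, hRsym]
    have h1 : Fᵀ * R = Fᵀ * (R * R) * R⁻¹ := by
      simp only [Matrix.mul_assoc]
      rw [hRRinv, Matrix.mul_one]
    rw [h1, hFP, Matrix.neg_mul, Matrix.mul_neg, neg_inj]
    simp only [Matrix.mul_assoc]
    rw [← Matrix.mul_assoc R⁻¹ R (R * (F * R⁻¹)), hRinvR, Matrix.one_mul]
  have hSR : S * R = R * F := by
    rw [hS, Matrix.mul_assoc (R * F) R⁻¹ R, hRinvR, Matrix.mul_one]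
  have hexpSR : ∀ t : ℝ, exp (t • S) * R = R * exp (t • F) := fun t =>
    myExpMulComm _ _ _ (by rw [Matrix.smul_mul, hSR, Matrix.mul_smul])
  have horth : ∀ t : ℝ, (exp (t • S))ᵀ * exp (t • S) = 1 := by
    intro t
    have h1 : (t • S)ᵀ = -(t • S) := by rw [Matrix.transpose_smul, hST, smul_neg]
    rw [← Matrix.exp_transpose, h1, ← Matrix.exp_add_of_commute _ _
      ((Commute.refl (t • S)).neg_left), neg_add_cancel, NormedSpace.exp_zero]
  -- norm preservation
  have hdot : ∀ t : ℝ,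
      (exp (t • S) *ᵥ (R *ᵥ w)) ⬝ᵥ (exp (t • S) *ᵥ (R *ᵥ w)) = (R *ᵥ w) ⬝ᵥ (R *ᵥ w) := by
    intro t
    have e : exp (t • S) *ᵥ (R *ᵥ w) = (R *ᵥ w) ᵥ* (exp (t • S))ᵀ := by
      have h := Matrix.mulVec_transpose (exp (t • S))ᵀ (R *ᵥ w)
      rwa [Matrix.transpose_transpose] at h
    nth_rewrite 1 [e]
    rw [← Matrix.dotProduct_mulVec,
      Matrix.mulVec_mulVec (R *ᵥ w) (exp (t • S))ᵀ (exp (t • S)), horth t, Matrix.one_mulVec]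
  -- pass to the limit
  have hRLcont : Continuous fun z : Fin n → ℝ => (R * L) *ᵥ z :=
    continuous_const.matrix_mulVec continuous_id
  have hgcont : Continuous fun z : Fin n → ℝ => ((R * L) *ᵥ z) ⬝ᵥ ((R * L) *ᵥ z) :=
    hRLcont.dotProduct hRLcont
  have hcomp := (hgcont.tendsto 0).comp hlim
  have hfun : ((fun z : Fin n → ℝ => ((R * L) *ᵥ z) ⬝ᵥ ((R * L) *ᵥ z)) ∘
      fun t : ℝ => exp (t • A) *ᵥ (U *ᵥ w)) = fun _ : ℝ => (R *ᵥ w) ⬝ᵥ (R *ᵥ w) := by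
    funext t
    have h2 : exp (t • A) *ᵥ (U *ᵥ w) = U *ᵥ (exp (t • F) *ᵥ w) := by
      rw [Matrix.mulVec_mulVec, hexpAU, ← Matrix.mulVec_mulVec]
    have h1 : (R * L) *ᵥ (exp (t • A) *ᵥ (U *ᵥ w)) = exp (t • S) *ᵥ (R *ᵥ w) := by
      rw [h2, Matrix.mulVec_mulVec, Matrix.mul_assoc, hLU, Matrix.mul_one,
        Matrix.mulVec_mulVec, ← hexpSR, ← Matrix.mulVec_mulVec]
    show ((R * L) *ᵥ (exp (t • A) *ᵥ (U *ᵥ w))) ⬝ᵥ ((R * L) *ᵥ (exp (t • A) *ᵥ (U *ᵥ w)))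
        = (R *ᵥ w) ⬝ᵥ (R *ᵥ w)
    rw [h1, hdot t]
  rw [hfun] at hcomp
  have hc := tendsto_nhds_unique hcomp tendsto_const_nhds
  simp only [Matrix.mulVec_zero, dotProduct_zero, zero_dotProduct] at hc
  have hRw : R *ᵥ w = 0 := dotProduct_self_eq_zero.mp hc.symm
  rw [← hvRw, hRw]
end
end
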